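/- Let β > 1. For Lebesgue-almost every x ∈ [0,1), liminf_{n→∞} (log T_β^n(x))/(log n) = −1, where T_β^n is the n-fold iterate of the β-transformation. -/

import Mathlib

open Filter Real MeasureTheory Set

/-- The β-transformation T_β(x) = βx - ⌊βx⌋. -/
noncomputable def bT (β x : ℝ) : ℝ := β * x - ⌊β * x⌋

/-- The k-th digit (0-based: `bDigit β x k = ε_{k+1}(x)`) of the β-expansion. -/
noncomputable def bDigit (β x : ℝ) (k : ℕ) : ℤ := ⌊β * ((bT β)^[k] x)⌋

/-- The n-th convergent ω_n(x) = Σ_{k=1}^n ε_k(x)/β^k. -/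
noncomputable def bConv (β x : ℝ) (n : ℕ) : ℝ :=
  ∑ k ∈ Finset.range n, (bDigit β x k : ℝ) / β ^ (k + 1)

/-- ℓ_n(x): length of the longest run of zero digits just after the n-th digit. -/
noncomputable def ellRun (β x : ℝ) (n : ℕ) : ℕ :=
  sSup {k : ℕ | ∀ j < k, bDigit β x (n + j) = 0}

/-- r_n(x): maximal length of a run of zeros within the first n digits. -/
noncomputable def runMax (β x : ℝ) (n : ℕ) : ℕ :=
  sSup {k : ℕ | ∃ i, i + k ≤ n ∧ ∀ j < k, bDigit β x (i + j) = 0}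

section Basic
variable {β : ℝ} (hβ : 1 < β)

lemma bT_eq_fract (x : ℝ) : bT β x = Int.fract (β * x) := rfl

lemma bT_mem_Ico (x : ℝ) : bT β x ∈ Set.Ico (0:ℝ) 1 := by
  rw [bT_eq_fract]; exact ⟨Int.fract_nonneg _, Int.fract_lt_one _⟩

lemma iter_mem {x : ℝ} (hx : x ∈ Set.Ico (0:ℝ) 1) (n : ℕ) :
    (bT β)^[n] x ∈ Set.Ico (0:ℝ) 1 := by
  cases n with
  | zero => exact hx
  | succ n => rw [Function.iterate_succ_apply']; exact bT_mem_Ico _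

lemma digit_shift (x : ℝ) (s j : ℕ) :
    bDigit β x (s + j) = bDigit β ((bT β)^[s] x) j := by
  unfold bDigit
  rw [add_comm, Function.iterate_add_apply]

lemma digit_nonneg {x : ℝ} (hx : x ∈ Set.Ico (0:ℝ) 1) (hβ0 : 0 ≤ β) (k : ℕ) :
    0 ≤ bDigit β x k := by
  unfold bDigit
  exact Int.floor_nonneg.2 (mul_nonneg hβ0 (iter_mem hx k).1)

lemma iter_nonneg {x : ℝ} (hx : 0 ≤ x) (n : ℕ) : 0 ≤ (bT β)^[n] x := by
  cases n with
  | zero => exact hx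
  | succ n => rw [Function.iterate_succ_apply']; exact (bT_mem_Ico _).1

include hβ

lemma iter_le {x : ℝ} (hx : 0 ≤ x) (n : ℕ) : (bT β)^[n] x ≤ β ^ n * x := by
  induction n generalizing x with
  | zero => simp
  | succ n ih =>
    rw [Function.iterate_succ_apply]
    have h1 : bT β x ≤ β * x := by
      have : (0:ℝ) ≤ ⌊β * x⌋ := by
        exact_mod_cast Int.floor_nonneg.2 (mul_nonneg (le_of_lt (lt_trans one_pos hβ)) hx)
      unfold bT; linarith
    calc (bT β)^[n] (bT β x) ≤ β ^ n * bT β x := ih (bT_mem_Ico x).1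
      _ ≤ β ^ n * (β * x) := by
          apply mul_le_mul_of_nonneg_left h1 (pow_nonneg (by linarith) n)
      _ = β ^ (n + 1) * x := by ring

lemma conv_add_iter (x : ℝ) (n : ℕ) :
    bConv β x n + ((bT β)^[n] x) / β ^ n = x := by
  have hβ0 : (0:ℝ) < β := lt_trans one_pos hβ
  induction n with
  | zero => simp [bConv]
  | succ n ih =>
    have h1 : bConv β x (n+1) = bConv β x n + (bDigit β x n : ℝ) / β ^ (n+1) := by
      rw [bConv, Finset.sum_range_succ]; rfl
    have h2 : (bT β)^[n+1] x = β * (bT β)^[n] x - (bDigit β x n : ℝ) := by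
      rw [Function.iterate_succ_apply']; rfl
    rw [h1, h2]
    have hpow : β ^ n ≠ 0 := ne_of_gt (pow_pos hβ0 n)
    have hpow1 : β ^ (n+1) ≠ 0 := ne_of_gt (pow_pos hβ0 (n+1))
    have hd : (bDigit β x n : ℝ) / β ^ (n+1) + (β * (bT β)^[n] x - (bDigit β x n : ℝ)) / β ^ (n+1)
        = (bT β)^[n] x / β ^ n := by
      rw [← add_div]
      have : (bDigit β x n : ℝ) + (β * (bT β)^[n] x - (bDigit β x n : ℝ)) = β * (bT β)^[n] x := by
        ring
      rw [this, pow_succ']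
      rw [mul_div_mul_left _ _ (ne_of_gt hβ0)]
    linarith [ih, hd]

lemma key_lower (s : ℕ) (x u : ℝ) (hu : 0 ≤ u) (hux : u ≤ (bT β)^[s] x) :
    (∀ i < s, bDigit β (x - ((bT β)^[s] x - u) / β ^ s) i = bDigit β x i) ∧
      (bT β)^[s] (x - ((bT β)^[s] x - u) / β ^ s) = u := by
  have hβ0 : (0:ℝ) < β := lt_trans one_pos hβ
  induction s generalizing x u with
  | zero =>
    constructor
    · intro i hi; exact absurd hi (Nat.not_lt_zero i)
    · simp
  | succ s ih =>
    set t := bT β x with ht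
    have hts : (bT β)^[s+1] x = (bT β)^[s] t := by rw [Function.iterate_succ_apply]
    have hux' : u ≤ (bT β)^[s] t := by rw [← hts]; exact hux
    obtain ⟨ihd, ihT⟩ := ih t u hu hux'
    set z := t - ((bT β)^[s] t - u) / β ^ s with hz
    set y := x - ((bT β)^[s+1] x - u) / β ^ (s+1) with hy
    have e : β * (((bT β)^[s] t - u) / β ^ (s+1)) = ((bT β)^[s] t - u) / β ^ s := by
      rw [← mul_div_assoc, pow_succ', mul_div_mul_left _ _ (ne_of_gt hβ0)]
    have hbx : β * x = (⌊β * x⌋ : ℝ) + t := by rw [ht]; unfold bT; ring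
    have hby : β * y = (⌊β * x⌋ : ℝ) + z := by
      rw [hy, mul_sub, hts, e, hz]
      linarith
    have hz0 : 0 ≤ z := by
      have h1 : ((bT β)^[s] t - u) / β ^ s ≤ (bT β)^[s] t / β ^ s :=
        (div_le_div_iff_of_pos_right (pow_pos hβ0 s)).2 (by linarith)
      have h2 : (bT β)^[s] t / β ^ s ≤ t := by
        rw [div_le_iff₀ (pow_pos hβ0 s)]
        calc (bT β)^[s] t ≤ β ^ s * t := iter_le hβ (bT_mem_Ico (β := β) x).1 s
          _ = t * β ^ s := by ring
      rw [hz]; linarith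
    have hz1 : z < 1 := by
      have : ((bT β)^[s] t - u) / β ^ s ≥ 0 :=
        div_nonneg (by linarith) (le_of_lt (pow_pos hβ0 s))
      have ht1 : t < 1 := (bT_mem_Ico x).2
      rw [hz]; linarith
    have hfloor : ⌊β * y⌋ = ⌊β * x⌋ := by
      rw [hby]
      rw [add_comm, Int.floor_add_intCast]
      have : ⌊z⌋ = 0 := Int.floor_eq_zero_iff.2 ⟨hz0, hz1⟩
      omega
    have hbTy : bT β y = z := by
      unfold bT; rw [hfloor, hby]; ring
    constructor
    · intro i hi
      match i with
      | 0 => unfold bDigit; simpa using hfloor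
      | (i+1) =>
        have h1 : bDigit β y (i+1) = bDigit β z i := by
          have := digit_shift (β := β) y 1 i
          simpa [hbTy, Nat.add_comm] using this
        have h2 : bDigit β x (i+1) = bDigit β t i := by
          have := digit_shift (β := β) x 1 i
          simpa [← ht, Nat.add_comm] using this
        rw [h1, h2]
        exact ihd i (by omega)
    · rw [Function.iterate_succ_apply, hbTy, ihT]

lemma zeros_iff {x : ℝ} (hx : x ∈ Set.Ico (0:ℝ) 1) (k : ℕ) :
    (∀ j < k, bDigit β x j = 0) ↔ x < (β ^ k)⁻¹ := by
  have hβ0 : (0:ℝ) < β := lt_trans one_pos hβ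
  induction k generalizing x with
  | zero => simpa using hx.2
  | succ k ih =>
    have hbx : 0 ≤ β * x := mul_nonneg hβ0.le hx.1
    constructor
    · intro h
      have h0 : bDigit β x 0 = 0 := h 0 (Nat.succ_pos k)
      have hf : ⌊β * x⌋ = 0 := by unfold bDigit at h0; simpa using h0
      have hTx : bT β x = β * x := by unfold bT; rw [hf]; simp
      have hrest : ∀ j < k, bDigit β (bT β x) j = 0 := by
        intro j hj
        have := digit_shift (β := β) x 1 j
        simp only [Function.iterate_one] at this
        rw [← this]
        exact h (1 + j) (by omega)
      have := (ih (bT_mem_Ico x)).1 hrest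
      rw [hTx] at this
      rw [pow_succ, mul_inv, ← div_eq_mul_inv, lt_div_iff₀ hβ0, mul_comm]
      exact this
    · intro h
      have hbxlt : β * x < (β ^ k)⁻¹ := by
        rw [pow_succ, mul_inv] at h
        calc β * x < β * ((β^k)⁻¹ * β⁻¹) := by
              apply mul_lt_mul_of_pos_left h hβ0
          _ = (β^k)⁻¹ * (β * β⁻¹) := by ring
          _ = (β^k)⁻¹ := by rw [mul_inv_cancel₀ (ne_of_gt hβ0), mul_one]
      have hf : ⌊β * x⌋ = 0 := by
        apply Int.floor_eq_zero_iff.2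
        constructor
        · exact hbx
        · calc β * x < (β^k)⁻¹ := hbxlt
            _ ≤ 1 := by
              rw [inv_le_one_iff₀]; right; exact one_le_pow₀ hβ.le
      intro j hj
      match j with
      | 0 => unfold bDigit; simpa using hf
      | (j+1) =>
        have hTx : bT β x = β * x := by unfold bT; rw [hf]; simp
        have h1 : bDigit β x (j+1) = bDigit β (bT β x) j := by
          have := digit_shift (β := β) x 1 j
          simpa [Nat.add_comm] using this
        rw [h1]
        refine (ih (bT_mem_Ico x)).2 ?_ j (by omega)
        rw [hTx]; exact hbxlt

end Basic

section Cyl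

variable {β : ℝ} (hβ : 1 < β)

noncomputable def bW (β : ℝ) (s : ℕ) (x : ℝ) : Fin s → ℤ := fun i => bDigit β x i

noncomputable def cylSet (β : ℝ) (s : ℕ) (v : Fin s → ℤ) : Set ℝ :=
  Set.Ico (0:ℝ) 1 ∩ (bW β s) ⁻¹' {v}

noncomputable def cylTop (β : ℝ) (s : ℕ) (v : Fin s → ℤ) : ℝ :=
  sSup ((fun x => (bT β)^[s] x) '' cylSet β s v)

noncomputable def wordSum (β : ℝ) {s : ℕ} (v : Fin s → ℤ) : ℝ :=
  ∑ i : Fin s, (v i : ℝ) / β ^ ((i : ℕ) + 1)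

lemma measurable_bT : Measurable (bT β) := by
  unfold bT
  exact (measurable_const.mul measurable_id).sub
    (measurable_from_top.comp ((measurable_const.mul measurable_id).floor))

lemma measurable_iter (s : ℕ) : Measurable (fun x => (bT β)^[s] x) :=
  Measurable.iterate measurable_bT s

lemma measurable_bDigit (k : ℕ) : Measurable (bDigit β · k) := by
  unfold bDigit
  exact (measurable_const.mul (measurable_iter k)).floor

lemma measurable_bW (s : ℕ) : Measurable (bW β s) :=
  measurable_pi_lambda _ (fun _ => measurable_bDigit _)

lemma measurableSet_cylSet (s : ℕ) (v : Fin s → ℤ) : MeasurableSet (cylSet β s v) :=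
  measurableSet_Ico.inter ((measurable_bW s) (MeasurableSet.singleton v))

lemma mem_cylSet_iff {s : ℕ} {v : Fin s → ℤ} {x : ℝ} :
    x ∈ cylSet β s v ↔ x ∈ Set.Ico (0:ℝ) 1 ∧ ∀ i : Fin s, bDigit β x (i : ℕ) = v i := by
  constructor
  · rintro ⟨h1, h2⟩
    exact ⟨h1, fun i => congrFun h2 i⟩
  · rintro ⟨h1, h2⟩
    exact ⟨h1, funext h2⟩

include hβ

lemma iter_lt_one {x : ℝ} (hx : x ∈ Set.Ico (0:ℝ) 1) (s : ℕ) : (bT β)^[s] x < 1 :=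
  (iter_mem hx s).2

lemma cylTop_mem (s : ℕ) (v : Fin s → ℤ) : cylTop β s v ∈ Set.Icc (0:ℝ) 1 := by
  rcases Set.eq_empty_or_nonempty (cylSet β s v) with h | h
  · unfold cylTop
    rw [h, Set.image_empty, Real.sSup_empty]
    exact ⟨le_refl 0, zero_le_one⟩
  · obtain ⟨x, hx⟩ := h
    have hbdd : BddAbove ((fun x => (bT β)^[s] x) '' cylSet β s v) := by
      refine ⟨1, ?_⟩
      rintro y ⟨z, hz, rfl⟩
      exact (iter_lt_one hβ hz.1 s).le
    constructor
    · refine le_trans (iter_nonneg (β := β) hx.1.1 s) (le_csSup hbdd ?_)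
      exact ⟨x, hx, rfl⟩
    · refine csSup_le ⟨_, ⟨x, hx, rfl⟩⟩ ?_
      rintro y ⟨z, hz, rfl⟩
      exact (iter_lt_one hβ hz.1 s).le

lemma bddAbove_cyl_image (s : ℕ) (v : Fin s → ℤ) :
    BddAbove ((fun x => (bT β)^[s] x) '' cylSet β s v) := by
  refine ⟨1, ?_⟩
  rintro y ⟨z, hz, rfl⟩
  exact (iter_lt_one hβ hz.1 s).le

lemma mem_cyl_eq {s : ℕ} {v : Fin s → ℤ} {x : ℝ} (hx : x ∈ cylSet β s v) :
    x = wordSum β v + ((bT β)^[s] x) / β ^ s := by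
  have h := conv_add_iter hβ x s
  have h2 : bConv β x s = wordSum β v := by
    rw [bConv, wordSum, ← Fin.sum_univ_eq_sum_range (fun k => (bDigit β x k : ℝ) / β ^ (k+1)) s]
    refine Finset.sum_congr rfl (fun i _ => ?_)
    rw [(mem_cylSet_iff.1 hx).2 i]
  rw [← h2]; linarith

lemma wordSum_nonneg {s : ℕ} {v : Fin s → ℤ} {x : ℝ} (hx : x ∈ cylSet β s v) :
    0 ≤ wordSum β v := by
  have h := mem_cyl_eq hβ hx
  have h2 : ((bT β)^[s] x) / β ^ s ≤ x := by
    rw [div_le_iff₀ (pow_pos (lt_trans one_pos hβ) s)]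
    calc (bT β)^[s] x ≤ β ^ s * x := iter_le hβ hx.1.1 s
      _ = x * β ^ s := mul_comm _ _
  linarith [hx.1.1]

lemma vol_cyl_inter (s : ℕ) (v : Fin s → ℤ) {a : ℝ} (ha : 0 < a) :
    volume (cylSet β s v ∩ {x | (bT β)^[s] x < a})
      = ENNReal.ofReal (min (cylTop β s v) a / β ^ s) := by
  have hβ0 : (0:ℝ) < β := lt_trans one_pos hβ
  have hβs : (0:ℝ) < β ^ s := pow_pos hβ0 s
  rcases Set.eq_empty_or_nonempty (cylSet β s v) with h | h
  · have hc : cylTop β s v = 0 := by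
      unfold cylTop; rw [h, Set.image_empty, Real.sSup_empty]
    rw [h, Set.empty_inter, hc]
    rw [min_eq_left ha.le, zero_div, ENNReal.ofReal_zero, measure_empty]
  · obtain ⟨x₀, hx₀⟩ := h
    set ω := wordSum β v with hω
    set c := cylTop β s v with hc
    have hc1 : c ≤ 1 := (cylTop_mem hβ s v).2
    have hωnn : 0 ≤ ω := wordSum_nonneg hβ hx₀
    have hsub1 : Set.Ico ω (ω + min c a / β ^ s) ⊆ cylSet β s v ∩ {x | (bT β)^[s] x < a} := by
      intro z hz
      set u := (z - ω) * β ^ s with hu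
      have hu0 : 0 ≤ u := mul_nonneg (by linarith [hz.1]) hβs.le
      have huc : u < min c a := by
        rw [hu]
        have := hz.2
        rw [← lt_div_iff₀ hβs]
        linarith [this]
      have hucc : u < c := lt_of_lt_of_le huc (min_le_left _ _)
      obtain ⟨w, hw, hwu⟩ : ∃ w ∈ ((fun x => (bT β)^[s] x) '' cylSet β s v), u < w := by
        have := exists_lt_of_lt_csSup (Set.Nonempty.image _ ⟨x₀, hx₀⟩) hucc
        exact this
      obtain ⟨y, hy, rfl⟩ := hw
      obtain ⟨hdig, hT⟩ := key_lower hβ s y u hu0 hwu.le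
      have hyz : y - ((bT β)^[s] y - u) / β ^ s = z := by
        have hyy := mem_cyl_eq hβ hy
        rw [hu, sub_div, mul_div_cancel_right₀ _ (ne_of_gt hβs)]
        linarith [hyy]
      rw [hyz] at hdig hT
      have hzIco : z ∈ Set.Ico (0:ℝ) 1 := by
        constructor
        · linarith [hz.1]
        · have : z ≤ y := by
            rw [← hyz]
            have h1 : 0 ≤ ((bT β)^[s] y - u) / β ^ s :=
              div_nonneg (by linarith) hβs.le
            linarith
          linarith [hy.1.2]
      refine ⟨mem_cylSet_iff.2 ⟨hzIco, fun i => ?_⟩, ?_⟩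
      · rw [hdig i i.2]
        exact (mem_cylSet_iff.1 hy).2 i
      · show (bT β)^[s] z < a
        rw [hT]
        exact lt_of_lt_of_le huc (min_le_right _ _)
    have hsub2 : cylSet β s v ∩ {x | (bT β)^[s] x < a} ⊆ Set.Icc ω (ω + min c a / β ^ s) := by
      rintro z ⟨hz, hza⟩
      have heq := mem_cyl_eq hβ hz
      have hle : (bT β)^[s] z ≤ min c a := by
        refine le_min ?_ (le_of_lt hza)
        exact le_csSup (bddAbove_cyl_image hβ s v) ⟨z, hz, rfl⟩
      have hnn : 0 ≤ (bT β)^[s] z := iter_nonneg (β := β) hz.1.1 s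
      constructor
      · rw [heq]
        have : 0 ≤ ((bT β)^[s] z) / β ^ s := div_nonneg hnn hβs.le
        linarith
      · rw [heq]
        have : ((bT β)^[s] z) / β ^ s ≤ min c a / β ^ s :=
          (div_le_div_iff_of_pos_right hβs).2 hle
        linarith
    have h1 := measure_mono (μ := (volume : Measure ℝ)) hsub1
    have h2 := measure_mono (μ := (volume : Measure ℝ)) hsub2
    rw [Real.volume_Ico] at h1
    rw [Real.volume_Icc] at h2
    rw [add_sub_cancel_left] at h1 h2
    exact le_antisymm h2 h1

lemma vol_cyl (s : ℕ) (v : Fin s → ℤ) :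
    volume (cylSet β s v) = ENNReal.ofReal (cylTop β s v / β ^ s) := by
  have h : cylSet β s v = cylSet β s v ∩ {x | (bT β)^[s] x < 1} := by
    refine (Set.inter_eq_left.2 ?_).symm
    intro x hx
    exact iter_lt_one hβ hx.1 s
  rw [h, vol_cyl_inter hβ s v one_pos, min_eq_left (cylTop_mem hβ s v).2]

end Cyl

open scoped ENNReal NNReal

section Count

open scoped Classical in
noncomputable def Wfin (β : ℝ) (s : ℕ) : Finset (Fin s → ℤ) :=
  (Fintype.piFinset (fun _ : Fin s => Finset.Icc (0:ℤ) ⌈β⌉)).filter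
    (fun v => (cylSet β s v).Nonempty)

lemma mem_Wfin {β : ℝ} {s : ℕ} {v : Fin s → ℤ} :
    v ∈ Wfin β s ↔ (∀ i, v i ∈ Finset.Icc (0:ℤ) ⌈β⌉) ∧ (cylSet β s v).Nonempty := by
  classical
  simp [Wfin, Fintype.mem_piFinset]

variable {β : ℝ} (hβ : 1 < β)

include hβ

lemma digit_mem_Icc {x : ℝ} (hx : x ∈ Set.Ico (0:ℝ) 1) (k : ℕ) :
    bDigit β x k ∈ Finset.Icc (0:ℤ) ⌈β⌉ := by
  rw [Finset.mem_Icc]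
  refine ⟨digit_nonneg hx (by linarith) k, ?_⟩
  unfold bDigit
  calc ⌊β * (bT β)^[k] x⌋ ≤ ⌊β⌋ := by
        apply Int.floor_le_floor
        nlinarith [(iter_mem (β := β) hx k).1, (iter_mem (β := β) hx k).2]
    _ ≤ ⌈β⌉ := Int.floor_le_ceil β

lemma word_mem_Wfin {x : ℝ} (hx : x ∈ Set.Ico (0:ℝ) 1) (s : ℕ) :
    bW β s x ∈ Wfin β s := by
  rw [mem_Wfin]
  exact ⟨fun i => digit_mem_Icc hβ hx _, ⟨x, hx, rfl⟩⟩

lemma vol_decomp (s : ℕ) (A : Set ℝ) (hA : MeasurableSet A) :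
    volume (Set.Ico (0:ℝ) 1 ∩ A) = ∑ v ∈ Wfin β s, volume (cylSet β s v ∩ A) := by
  have hdecomp : Set.Ico (0:ℝ) 1 ∩ A = ⋃ v ∈ Wfin β s, (cylSet β s v ∩ A) := by
    ext x
    constructor
    · rintro ⟨hx, hxA⟩
      refine Set.mem_biUnion (word_mem_Wfin hβ hx s) ⟨⟨hx, rfl⟩, hxA⟩
    · rintro hx
      obtain ⟨v, _, hv⟩ := Set.mem_iUnion₂.1 hx
      exact ⟨hv.1.1, hv.2⟩
  rw [hdecomp]
  rw [measure_biUnion_finset ?hd ?hm]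
  case hd =>
    intro v hv w hw hvw
    apply Set.disjoint_left.2
    rintro x ⟨⟨_, hx1⟩, _⟩ ⟨⟨_, hx2⟩, _⟩
    exact hvw (hx1.symm.trans hx2)
  case hm =>
    intro v _
    exact (measurableSet_cylSet _ _).inter hA

lemma sum_cylTop (s : ℕ) : ∑ v ∈ Wfin β s, cylTop β s v / β ^ s = 1 := by
  have h := vol_decomp hβ s Set.univ MeasurableSet.univ
  rw [Set.inter_univ, Real.volume_Ico] at h
  simp only [Set.inter_univ] at h
  rw [show (1:ℝ) - 0 = 1 by ring, ENNReal.ofReal_one] at h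
  have h2 : ∀ v ∈ Wfin β s, volume (cylSet β s v) = ENNReal.ofReal (cylTop β s v / β ^ s) :=
    fun v _ => vol_cyl hβ s v
  rw [Finset.sum_congr rfl h2] at h
  have hnn : ∀ v ∈ Wfin β s, 0 ≤ cylTop β s v / β ^ s := fun v _ =>
    div_nonneg (cylTop_mem hβ s v).1 (pow_pos (by linarith) s).le
  rw [← ENNReal.ofReal_sum_of_nonneg hnn] at h
  have := ENNReal.ofReal_eq_one.1 h.symm
  linarith [this]

lemma sum_cylTop' (s : ℕ) : ∑ v ∈ Wfin β s, cylTop β s v = β ^ s := by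
  have h := sum_cylTop hβ s
  have hβs : (β:ℝ) ^ s ≠ 0 := ne_of_gt (pow_pos (by linarith) s)
  rw [← Finset.sum_div] at h
  field_simp at h
  linarith [h]

lemma card_Wfin (s : ℕ) : ((Wfin β s).card : ℝ) ≤ β ^ (s + 1) / (β - 1) := by
  have hβ1 : (0:ℝ) < β - 1 := by linarith
  induction s with
  | zero =>
    have : (Wfin β 0).card ≤ 1 := by
      apply Finset.card_le_one.2
      intro a ha b hb
      funext i
      exact absurd i.2 (Nat.not_lt_zero _)
    calc ((Wfin β 0).card : ℝ) ≤ 1 := by exact_mod_cast this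
      _ ≤ β ^ (0+1) / (β - 1) := by
        rw [le_div_iff₀ hβ1, zero_add, pow_one]; linarith
  | succ s ih =>
    have hsub : Wfin β (s+1) ⊆ (Wfin β s).biUnion
        (fun w => (Finset.Icc (0:ℤ) ⌊β * cylTop β s w⌋).image (fun j => Fin.snoc w j)) := by
      intro v hv
      obtain ⟨-, x, hx⟩ := mem_Wfin.1 hv
      have hxv : ∀ i : Fin (s+1), bDigit β x (i : ℕ) = v i := (mem_cylSet_iff.1 hx).2
      have hxI : x ∈ Set.Ico (0:ℝ) 1 := hx.1
      have hxw : x ∈ cylSet β s (Fin.init v) := by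
        refine mem_cylSet_iff.2 ⟨hxI, fun i => ?_⟩
        simpa [Fin.init] using hxv i.castSucc
      have hwmem : Fin.init v ∈ Wfin β s := by
        have heq : Fin.init v = bW β s x := by
          funext i
          simpa [Fin.init, bW] using (hxv i.castSucc).symm
        rw [heq]
        exact word_mem_Wfin hβ hxI s
      refine Finset.mem_biUnion.2 ⟨Fin.init v, hwmem, ?_⟩
      refine Finset.mem_image.2 ⟨v (Fin.last s), ?_, ?_⟩
      · rw [Finset.mem_Icc]
        constructor
        · rw [← hxv (Fin.last s)]
          exact digit_nonneg hxI (by linarith) _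
        · rw [← hxv (Fin.last s)]
          show bDigit β x s ≤ ⌊β * cylTop β s (Fin.init v)⌋
          unfold bDigit
          apply Int.floor_le_floor
          apply mul_le_mul_of_nonneg_left ?_ (by linarith : (0:ℝ) ≤ β)
          exact le_csSup (bddAbove_cyl_image hβ s (Fin.init v)) ⟨x, hxw, rfl⟩
      · exact Fin.snoc_init_self v
    have hcard : (Wfin β (s+1)).card ≤
        ∑ w ∈ Wfin β s, ((⌊β * cylTop β s w⌋ + 1).toNat) := by
      calc (Wfin β (s+1)).card ≤ _ := Finset.card_le_card hsub
        _ ≤ ∑ w ∈ Wfin β s, ((Finset.Icc (0:ℤ) ⌊β * cylTop β s w⌋).image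
            (fun j => Fin.snoc w j : ℤ → (Fin (s+1) → ℤ))).card := Finset.card_biUnion_le
        _ ≤ _ := by
          apply Finset.sum_le_sum
          intro w _
          calc ((Finset.Icc (0:ℤ) ⌊β * cylTop β s w⌋).image _).card
              ≤ (Finset.Icc (0:ℤ) ⌊β * cylTop β s w⌋).card := Finset.card_image_le
            _ = (⌊β * cylTop β s w⌋ + 1 - 0).toNat := Int.card_Icc _ _
            _ = (⌊β * cylTop β s w⌋ + 1).toNat := by rw [sub_zero]
    have hreal : ((Wfin β (s+1)).card : ℝ) ≤ ∑ w ∈ Wfin β s, (β * cylTop β s w + 1) := by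
      calc ((Wfin β (s+1)).card : ℝ) ≤
          (∑ w ∈ Wfin β s, ((⌊β * cylTop β s w⌋ + 1).toNat) : ℕ) := by exact_mod_cast hcard
        _ = ∑ w ∈ Wfin β s, (((⌊β * cylTop β s w⌋ + 1).toNat : ℝ)) := by push_cast; ring
        _ ≤ _ := by
          apply Finset.sum_le_sum
          intro w _
          have h0 : (0:ℤ) ≤ ⌊β * cylTop β s w⌋ + 1 := by
            have : (0:ℝ) ≤ β * cylTop β s w :=
              mul_nonneg (by linarith) (cylTop_mem hβ s w).1
            have := Int.floor_nonneg.2 this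
            omega
          have hcast : (((⌊β * cylTop β s w⌋ + 1).toNat : ℕ) : ℝ)
              = ((⌊β * cylTop β s w⌋ : ℝ) + 1) := by
            exact_mod_cast congrArg (fun z : ℤ => (z : ℝ)) (Int.toNat_of_nonneg h0)
          rw [hcast]
          linarith [Int.floor_le (β * cylTop β s w)]
    have hsum : ∑ w ∈ Wfin β s, (β * cylTop β s w + 1)
        = β ^ (s+1) + (Wfin β s).card := by
      rw [Finset.sum_add_distrib, ← Finset.mul_sum, sum_cylTop' hβ s, Finset.sum_const,
        nsmul_eq_mul, mul_one, pow_succ]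
      ring
    rw [hsum] at hreal
    calc ((Wfin β (s+1)).card : ℝ) ≤ β ^ (s+1) + (Wfin β s).card := hreal
      _ ≤ β ^ (s+1) + β ^ (s+1) / (β - 1) := by linarith [ih]
      _ = β ^ (s+1+1) / (β-1) := by field_simp; ring

lemma vol_T_lt (s : ℕ) {a : ℝ} (ha : 0 < a) :
    volume (Set.Ico (0:ℝ) 1 ∩ {x | (bT β)^[s] x < a}) ≤ ENNReal.ofReal (β / (β - 1) * a) := by
  have hβ0 : (0:ℝ) < β := by linarith
  have hβs : (0:ℝ) < β ^ s := pow_pos hβ0 s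
  have hβ1 : (0:ℝ) < β - 1 := by linarith
  have hA : MeasurableSet {x : ℝ | (bT β)^[s] x < a} :=
    measurableSet_lt (measurable_iter s) measurable_const
  rw [vol_decomp hβ s _ hA]
  calc ∑ v ∈ Wfin β s, volume (cylSet β s v ∩ {x | (bT β)^[s] x < a})
      ≤ ∑ _v ∈ Wfin β s, ENNReal.ofReal (a / β ^ s) := by
        apply Finset.sum_le_sum
        intro v _
        rw [vol_cyl_inter hβ s v ha]
        apply ENNReal.ofReal_le_ofReal
        exact (div_le_div_iff_of_pos_right hβs).2 (min_le_right _ _)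
    _ = ((Wfin β s).card : ℝ≥0∞) * ENNReal.ofReal (a / β ^ s) := by
        rw [Finset.sum_const, nsmul_eq_mul]
    _ ≤ ENNReal.ofReal (β ^ (s+1) / (β - 1)) * ENNReal.ofReal (a / β ^ s) := by
        apply mul_le_mul_left
        have hcc : ((Wfin β s).card : ℝ≥0∞) = ENNReal.ofReal ((Wfin β s).card : ℝ) := by
          rw [ENNReal.ofReal_natCast]
        rw [hcc]
        exact ENNReal.ofReal_le_ofReal (card_Wfin hβ s)
    _ = ENNReal.ofReal (β ^ (s+1) / (β - 1) * (a / β ^ s)) := by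
        rw [ENNReal.ofReal_mul (by positivity)]
    _ = ENNReal.ofReal (β / (β - 1) * a) := by
        congr 1
        field_simp
        ring

end Count

section PartA

variable {β : ℝ} (hβ : 1 < β)

include hβ

lemma null_hits_zero :
    volume {x | x ∈ Set.Ico (0:ℝ) 1 ∧ ∃ n, (bT β)^[n] x = 0} = 0 := by
  have h : {x | x ∈ Set.Ico (0:ℝ) 1 ∧ ∃ n, (bT β)^[n] x = 0}
      ⊆ ⋃ n : ℕ, ⋃ v ∈ Wfin β n, {wordSum β v} := by
    rintro x ⟨hx, n, hn⟩
    refine Set.mem_iUnion.2 ⟨n, Set.mem_biUnion (word_mem_Wfin hβ hx n) ?_⟩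
    have hx' : x ∈ cylSet β n (bW β n x) := ⟨hx, rfl⟩
    have := mem_cyl_eq hβ hx'
    rw [hn] at this
    simp only [zero_div, add_zero] at this
    exact this
  refine measure_mono_null h ?_
  refine measure_iUnion_null fun n => ?_
  refine (measure_biUnion_null_iff (Set.to_countable _)).2 fun v _ => ?_
  exact measure_singleton _

lemma ae_eventually_large (ε : ℝ) (hε : 0 < ε) :
    ∀ᵐ x ∂(volume.restrict (Set.Ico (0:ℝ) 1)),
      ∀ᶠ n : ℕ in Filter.atTop, ((n:ℝ)) ^ (-(1+ε) : ℝ) ≤ (bT β)^[n] x := by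
  set μ := volume.restrict (Set.Ico (0:ℝ) 1) with hμ
  set s : ℕ → Set ℝ := fun n => {x | (bT β)^[n] x < ((n:ℝ)) ^ (-(1+ε) : ℝ)} with hs
  have hmeas : ∀ n, MeasurableSet (s n) := fun n =>
    measurableSet_lt (measurable_iter n) measurable_const
  have hbound : ∀ n, μ (s n) ≤ ENNReal.ofReal (β/(β-1) * (((n:ℝ) ^ (1+ε : ℝ))⁻¹)) := by
    intro n
    rw [hμ, Measure.restrict_apply (hmeas n)]
    rcases Nat.eq_zero_or_pos n with h0 | hpos
    · subst h0
      have : ((0:ℕ):ℝ) ^ (-(1+ε) : ℝ) = 0 := by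
        rw [Nat.cast_zero]
        exact Real.zero_rpow (by linarith)
      have hempty : s 0 ∩ Set.Ico (0:ℝ) 1 = ∅ := by
        ext x
        simp only [hs, Set.mem_inter_iff, Set.mem_setOf_eq, Set.mem_empty_iff_false, iff_false,
          not_and, this]
        intro hlt hx
        simp at hlt
        linarith [hx.1]
      rw [hempty, measure_empty]
      exact zero_le
    · have hnpos : (0:ℝ) < (n:ℝ) := by exact_mod_cast hpos
      have ha : (0:ℝ) < ((n:ℝ)) ^ (-(1+ε) : ℝ) := Real.rpow_pos_of_pos hnpos _
      have := vol_T_lt hβ n ha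
      rw [Set.inter_comm]
      refine le_trans this ?_
      rw [Real.rpow_neg hnpos.le]
  have hsum : (∑' n, μ (s n)) ≠ ⊤ := by
    have hsummable : Summable (fun n : ℕ => β/(β-1) * (((n:ℝ) ^ (1+ε : ℝ))⁻¹)) := by
      apply Summable.mul_left
      exact Real.summable_nat_rpow_inv.2 (by linarith)
    have hnn : ∀ n : ℕ, 0 ≤ β/(β-1) * (((n:ℝ) ^ (1+ε : ℝ))⁻¹) := by
      intro n
      apply mul_nonneg (div_nonneg (by linarith) (by linarith))
      positivity
    have h1 : (∑' n : ℕ, μ (s n))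
        ≤ ENNReal.ofReal (∑' n : ℕ, β/(β-1) * (((n:ℝ) ^ (1+ε : ℝ))⁻¹)) := by
      rw [ENNReal.ofReal_tsum_of_nonneg hnn hsummable]
      exact ENNReal.tsum_le_tsum hbound
    exact ne_top_of_le_ne_top ENNReal.ofReal_ne_top h1
  have := MeasureTheory.ae_eventually_notMem hsum
  filter_upwards [this] with x hx
  filter_upwards [hx] with n hn
  simp only [hs, Set.mem_setOf_eq, not_lt] at hn
  exact hn

end PartA

section Condexp

open MeasureTheory

lemma le_condexp_of_forall_meas {Ω : Type*} {m m0 : MeasurableSpace Ω} (hm : m ≤ m0)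
    (μ : Measure Ω) [IsFiniteMeasure μ] {A : Set Ω} (hA : MeasurableSet A) {c : ℝ} (hc : 0 ≤ c)
    (h : ∀ B, MeasurableSet[m] B → ENNReal.ofReal c * μ B ≤ μ (A ∩ B)) :
    ∀ᵐ ω ∂μ, c ≤ (μ[A.indicator (fun _ => (1:ℝ)) | m]) ω := by
  set g := μ[A.indicator (fun _ => (1:ℝ)) | m] with hg
  have hgmeas : Measurable[m] g := stronglyMeasurable_condExp.measurable
  have hint : Integrable (A.indicator (fun _ => (1:ℝ))) μ :=
    (integrable_const (1:ℝ)).indicator hA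
  have hB : ∀ n : ℕ, μ {ω | g ω ≤ c - 1/(n+1)} = 0 := by
    intro n
    set B := {ω | g ω ≤ c - 1/(n+1)} with hBdef
    have hBm : MeasurableSet[m] B := hgmeas measurableSet_Iic
    have hBm0 : MeasurableSet B := hm _ hBm
    have h1 : ∫ ω in B, g ω ∂μ = ∫ ω in B, A.indicator (fun _ => (1:ℝ)) ω ∂μ :=
      setIntegral_condExp hm hint hBm
    have h2 : ∫ ω in B, A.indicator (fun _ => (1:ℝ)) ω ∂μ = (μ (A ∩ B)).toReal := by
      rw [setIntegral_indicator hA, setIntegral_const, smul_eq_mul, mul_one, Set.inter_comm]; rfl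
    have h3 : ∫ ω in B, g ω ∂μ ≤ (c - 1/(n+1)) * (μ B).toReal := by
      calc ∫ ω in B, g ω ∂μ ≤ ∫ _ω in B, (c - 1/(n+1)) ∂μ := by
            apply setIntegral_mono_on integrable_condExp.integrableOn
              (integrableOn_const (measure_ne_top μ B)) hBm0
            intro ω hω
            exact hω
        _ = (μ B).toReal * (c - 1/(n+1)) := by rw [setIntegral_const, smul_eq_mul]; rfl
        _ = (c - 1/(n+1)) * (μ B).toReal := mul_comm _ _
    have h4 : c * (μ B).toReal ≤ (μ (A ∩ B)).toReal := by
      have := h B hBm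
      have htr := ENNReal.toReal_mono (measure_ne_top μ _) this
      rw [ENNReal.toReal_mul, ENNReal.toReal_ofReal hc] at htr
      exact htr
    have hδ : (0:ℝ) < 1/(n+1) := by positivity
    have ht0 : (μ B).toReal ≤ 0 := by nlinarith [h1, h2, h3, h4]
    have := ENNReal.toReal_nonneg (a := μ B)
    have heq : (μ B).toReal = 0 := le_antisymm ht0 this
    exact (ENNReal.toReal_eq_zero_iff _).1 heq |>.resolve_right (measure_ne_top μ B)
  have hsub : {ω | g ω < c} ⊆ ⋃ n : ℕ, {ω | g ω ≤ c - 1/(n+1)} := by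
    intro ω hω
    have hω' : g ω < c := hω
    obtain ⟨n, hn⟩ := exists_nat_one_div_lt (sub_pos.2 hω')
    exact Set.mem_iUnion.2 ⟨n, by simp only [Set.mem_setOf_eq]; linarith [hn]⟩
  have hnull : μ {ω | g ω < c} = 0 :=
    measure_mono_null hsub (measure_iUnion_null hB)
  rw [MeasureTheory.ae_iff]
  convert hnull using 2
  ext ω
  simp [not_le]

end Condexp

section Filt

noncomputable def cylAlg (β : ℝ) (n : ℕ) : MeasurableSpace ℝ :=
  MeasurableSpace.comap (bW β n) ⊤

lemma measurableSet_word_all {n : ℕ} (S : Set (Fin n → ℤ)) : MeasurableSet S :=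
  S.to_countable.measurableSet

lemma cylAlg_le (β : ℝ) (n : ℕ) : cylAlg β n ≤ (inferInstance : MeasurableSpace ℝ) := by
  rintro S ⟨S', -, rfl⟩
  exact measurable_bW n (measurableSet_word_all S')

lemma cylAlg_mono (β : ℝ) {n m : ℕ} (h : n ≤ m) : cylAlg β n ≤ cylAlg β m := by
  rintro S ⟨S', -, rfl⟩
  refine ⟨(fun f : Fin m → ℤ => (fun i : Fin n => f (Fin.castLE h i))) ⁻¹' S', trivial, ?_⟩
  rfl

lemma mem_cylAlg_iff {β : ℝ} {n : ℕ} {B : Set ℝ} :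
    MeasurableSet[cylAlg β n] B ↔ ∃ S : Set (Fin n → ℤ), B = (bW β n) ⁻¹' S := by
  constructor
  · rintro ⟨S, -, rfl⟩; exact ⟨S, rfl⟩
  · rintro ⟨S, rfl⟩; exact ⟨S, trivial, rfl⟩

variable {β : ℝ} (hβ : 1 < β)

lemma iter_mem_pos {x : ℝ} {s : ℕ} (hs : 1 ≤ s) : (bT β)^[s] x ∈ Set.Ico (0:ℝ) 1 := by
  obtain ⟨t, rfl⟩ := Nat.exists_eq_add_of_le hs
  rw [add_comm, Function.iterate_add_apply]
  exact iter_mem (bT_mem_Ico _) t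

include hβ

lemma event_mem_cylAlg {s : ℕ} (hs : 1 ≤ s) (k : ℕ) :
    MeasurableSet[cylAlg β (s + k)] {x : ℝ | (bT β)^[s] x < (β ^ k)⁻¹} := by
  rw [mem_cylAlg_iff]
  refine ⟨{f : Fin (s+k) → ℤ | ∀ j : Fin (s+k), s ≤ (j:ℕ) → f j = 0}, ?_⟩
  ext x
  simp only [Set.mem_setOf_eq, Set.mem_preimage]
  rw [← zeros_iff hβ (iter_mem_pos hs) k]
  constructor
  · intro h j hj
    have hj2 : (j:ℕ) - s < k := by omega
    have := h ((j:ℕ) - s) hj2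
    rw [← digit_shift x s ((j:ℕ) - s)] at this
    show bDigit β x (j:ℕ) = 0
    rwa [show s + ((j:ℕ) - s) = (j:ℕ) by omega] at this
  · intro h j hj
    rw [← digit_shift x s j]
    have hjj : s + j < s + k := by omega
    have := h ⟨s + j, hjj⟩ (by simp)
    exact this

/-- The core conditional measure bound. -/
lemma cond_bound (t k : ℕ) :
    ∀ B : Set ℝ, MeasurableSet[cylAlg β t] B →
      ENNReal.ofReal ((β ^ k)⁻¹) * (volume.restrict (Set.Ico (0:ℝ) 1)) B
        ≤ (volume.restrict (Set.Ico (0:ℝ) 1)) ({x : ℝ | (bT β)^[t] x < (β ^ k)⁻¹} ∩ B) := by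
  intro B hB
  have hβ0 : (0:ℝ) < β := by linarith
  have hβt : (0:ℝ) < β ^ t := pow_pos hβ0 t
  have hβk : (0:ℝ) < (β ^ k)⁻¹ := by positivity
  obtain ⟨S, rfl⟩ := mem_cylAlg_iff.1 hB
  set A := {x : ℝ | (bT β)^[t] x < (β ^ k)⁻¹} with hA
  have hAmeas : MeasurableSet A := measurableSet_lt (measurable_iter t) measurable_const
  have hBmeas : MeasurableSet ((bW β t) ⁻¹' S) := measurable_bW t (measurableSet_word_all S)
  rw [Measure.restrict_apply hBmeas, Measure.restrict_apply (hAmeas.inter hBmeas)]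
  have hdecompB : (bW β t) ⁻¹' S ∩ Set.Ico (0:ℝ) 1 = ⋃ v ∈ S, cylSet β t v := by
    ext x
    simp only [Set.mem_inter_iff, Set.mem_preimage, Set.mem_iUnion]
    constructor
    · rintro ⟨hS, hx⟩
      exact ⟨bW β t x, hS, hx, rfl⟩
    · rintro ⟨v, hv, hx, heq⟩
      exact ⟨by rw [heq]; exact hv, hx⟩
  have hdecompAB : (A ∩ (bW β t) ⁻¹' S) ∩ Set.Ico (0:ℝ) 1 = ⋃ v ∈ S, (cylSet β t v ∩ A) := by
    ext x
    simp only [Set.mem_inter_iff, Set.mem_preimage, Set.mem_iUnion]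
    constructor
    · rintro ⟨⟨hxA, hS⟩, hx⟩
      exact ⟨bW β t x, hS, ⟨⟨hx, rfl⟩, hxA⟩⟩
    · rintro ⟨v, hv, ⟨⟨hx, heq⟩, hxA⟩⟩
      refine ⟨⟨hxA, ?_⟩, hx⟩
      have : bW β t x = v := heq
      rw [this]; exact hv
  have hdisj : (S : Set (Fin t → ℤ)).PairwiseDisjoint (cylSet β t) := by
    intro v _ w _ hvw
    apply Set.disjoint_left.2
    rintro x ⟨_, hx1⟩ ⟨_, hx2⟩
    have h1 : bW β t x = v := hx1
    have h2 : bW β t x = w := hx2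
    exact hvw (h1.symm.trans h2)
  have hdisj2 : (S : Set (Fin t → ℤ)).PairwiseDisjoint (fun v => cylSet β t v ∩ A) := by
    intro v hv w hw hvw
    exact (hdisj hv hw hvw).mono Set.inter_subset_left Set.inter_subset_left
  have hcnt : (S : Set (Fin t → ℤ)).Countable := Set.to_countable _
  rw [hdecompB, hdecompAB]
  rw [measure_biUnion hcnt hdisj (fun v _ => measurableSet_cylSet t v),
    measure_biUnion hcnt hdisj2 (fun v _ => (measurableSet_cylSet t v).inter hAmeas)]
  rw [← ENNReal.tsum_mul_left]
  apply ENNReal.tsum_le_tsum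
  intro v
  rw [vol_cyl hβ t v, vol_cyl_inter hβ t v hβk]
  rw [← ENNReal.ofReal_mul hβk.le]
  apply ENNReal.ofReal_le_ofReal
  have hc0 : 0 ≤ cylTop β t (v:Fin t → ℤ) := (cylTop_mem hβ t v).1
  have hc1 : cylTop β t (v:Fin t → ℤ) ≤ 1 := (cylTop_mem hβ t v).2
  have hk1 : (β ^ k)⁻¹ ≤ 1 := by
    rw [inv_le_one_iff₀]; right; exact one_le_pow₀ hβ.le
  have key : (β ^ k)⁻¹ * cylTop β t v ≤ min (cylTop β t v) ((β ^ k)⁻¹) := by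
    rcases le_total (cylTop β t v) ((β ^ k)⁻¹) with h | h
    · rw [min_eq_left h]; nlinarith
    · rw [min_eq_right h]; nlinarith
  calc (β ^ k)⁻¹ * (cylTop β t v / β ^ t) = ((β ^ k)⁻¹ * cylTop β t v) / β ^ t := by ring
    _ ≤ min (cylTop β t v) ((β ^ k)⁻¹) / β ^ t := (div_le_div_iff_of_pos_right hβt).2 key

end Filt

section PartB

open MeasureTheory

variable {β : ℝ} (hβ : 1 < β)

lemma probIco : IsProbabilityMeasure (volume.restrict (Set.Ico (0:ℝ) 1)) := by
  constructor
  rw [Measure.restrict_apply_univ, Real.volume_Ico]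
  norm_num

include hβ

lemma ae_frequently_small {ε : ℝ} (hε0 : 0 < ε) (hε1 : ε < 1) :
    ∀ᵐ x ∂(volume.restrict (Set.Ico (0:ℝ) 1)),
      ∃ᶠ n : ℕ in Filter.atTop, 2 ≤ n ∧ (bT β)^[n] x < (n:ℝ) ^ (-(1-ε) : ℝ) := by
  classical
  set μ := volume.restrict (Set.Ico (0:ℝ) 1) with hμdef
  haveI : IsProbabilityMeasure μ := probIco
  have hβ0 : (0:ℝ) < β := by linarith
  have hc : (0:ℝ) < Real.log β := Real.log_pos hβ
  -- the window lengths
  set w : ℕ → ℕ := fun m => ⌈(1 - ε/2) * Real.log m / Real.log β⌉₊ + 1 with hwdef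
  have hw1 : ∀ m, 1 ≤ w m := fun m => Nat.le_add_left 1 _
  have hlognn : ∀ m : ℕ, 0 ≤ Real.log m := by
    intro m
    rcases Nat.eq_zero_or_pos m with rfl | hm
    · simp
    · exact Real.log_nonneg (by exact_mod_cast hm)
  have hlogmono : ∀ {m n : ℕ}, m ≤ n → Real.log m ≤ Real.log n := by
    intro m n hmn
    rcases Nat.eq_zero_or_pos m with rfl | hm
    · simpa using hlognn n
    · exact Real.log_le_log (by exact_mod_cast hm) (by exact_mod_cast hmn)
  have hwmono : Monotone w := by
    intro m n hmn
    have : (1 - ε/2) * Real.log m / Real.log β ≤ (1 - ε/2) * Real.log n / Real.log β :=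
      (div_le_div_iff_of_pos_right hc).2 (mul_le_mul_of_nonneg_left (hlogmono hmn) (by linarith))
    exact Nat.add_le_add_right (Nat.ceil_le_ceil this) 1
  set Snat : ℕ → ℕ := fun m => ∑ i ∈ Finset.range m, w i with hSdef
  have hSsucc : ∀ m, Snat (m+1) = Snat m + w m := fun m => Finset.sum_range_succ w m
  have hSge : ∀ m, m ≤ Snat m := by
    intro m
    calc m = ∑ _i ∈ Finset.range m, 1 := by simp
      _ ≤ Snat m := Finset.sum_le_sum (fun i _ => hw1 i)
  have hSmono : StrictMono Snat := by
    apply strictMono_nat_of_lt_succ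
    intro n
    rw [hSsucc]
    have := hw1 n
    omega
  have hSle : ∀ m, 1 ≤ m → (Snat m : ℝ) ≤ (m : ℝ) * (w m : ℝ) := by
    intro m hm
    have : Snat m ≤ m * w m := by
      calc Snat m ≤ ∑ _i ∈ Finset.range m, w m :=
            Finset.sum_le_sum (fun i hi => hwmono (Finset.mem_range.1 hi).le)
        _ = m * w m := by simp [mul_comm]
    exact_mod_cast this
  -- filtration
  set ℱ : Filtration ℕ (inferInstance : MeasurableSpace ℝ) :=
    { seq := fun n => cylAlg β (Snat (n+1))
      mono' := fun n m hnm => cylAlg_mono β (hSmono.monotone (Nat.add_le_add_right hnm 1))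
      le' := fun n => cylAlg_le β _ } with hℱdef
  -- events
  set evt : ℕ → Set ℝ := fun m =>
    if m = 0 then (∅ : Set ℝ) else {x : ℝ | (bT β)^[Snat m] x < (β ^ (w m))⁻¹} with hevtdef
  have hevt : ∀ n, MeasurableSet[ℱ n] (evt n) := by
    intro n
    cases n with
    | zero => simp only [hevtdef, if_pos rfl]; exact @MeasurableSet.empty _ (ℱ 0)
    | succ k =>
      simp only [hevtdef, if_neg (Nat.succ_ne_zero k)]
      have h1 : 1 ≤ Snat (k+1) := le_trans (by omega) (hSge (k+1))
      have h2 := event_mem_cylAlg hβ h1 (w (k+1))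
      have h3 : Snat (k+1) + w (k+1) = Snat (k+2) := (hSsucc (k+1)).symm
      rw [h3] at h2
      exact h2
  -- conditional expectation bound
  have hce : ∀ k : ℕ, ∀ᵐ x ∂μ,
      ((β : ℝ) ^ (w (k+1)))⁻¹ ≤ (μ[(evt (k+1)).indicator (fun _ => (1:ℝ)) | ℱ k]) x := by
    intro k
    have hAm : MeasurableSet (evt (k+1)) := by
      simp only [hevtdef, if_neg (Nat.succ_ne_zero k)]
      exact measurableSet_lt (measurable_iter _) measurable_const
    apply le_condexp_of_forall_meas (ℱ.le k) μ hAm (by positivity)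
    intro B hB
    have := cond_bound hβ (Snat (k+1)) (w (k+1)) B hB
    simp only [hevtdef, if_neg (Nat.succ_ne_zero k)]
    exact this
  -- divergence of the sum of lower bounds
  have hdiv : Filter.Tendsto (fun n => ∑ k ∈ Finset.range n, ((β:ℝ) ^ (w (k+1)))⁻¹)
      Filter.atTop Filter.atTop := by
    have hnn : ∀ k : ℕ, 0 ≤ ((β:ℝ) ^ (w (k+1)))⁻¹ := by intro k; positivity
    rw [← not_summable_iff_tendsto_nat_atTop_of_nonneg hnn]
    intro hsummable
    -- lower bound by a divergent p-series
    have hlb : ∀ k : ℕ, (((k:ℝ)+1) ^ ((1:ℝ) - ε/2))⁻¹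
        ≤ β * β * ((β:ℝ) ^ (w (k+1)))⁻¹ := by
      intro k
      have hk1 : (0:ℝ) < (k:ℝ)+1 := by positivity
      have hwle : ((w (k+1) : ℕ) : ℝ) ≤ (1 - ε/2) * Real.log ((k:ℝ)+1) / Real.log β + 2 := by
        have h0 : (0:ℝ) ≤ (1 - ε/2) * Real.log ((k+1:ℕ):ℝ) / Real.log β := by
          apply div_nonneg (mul_nonneg (by linarith) (hlognn _)) hc.le
        have := Nat.ceil_lt_add_one (R := ℝ) h0
        rw [hwdef]
        push_cast
        push_cast at this
        linarith [this]
      have hpow : (β:ℝ) ^ (w (k+1)) ≤ β * β * (((k:ℝ)+1) ^ ((1:ℝ) - ε/2)) := by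
        have h1 : ((β:ℝ) ^ (w (k+1)) : ℝ) = Real.exp ((w (k+1) : ℝ) * Real.log β) := by
          rw [← Real.rpow_natCast β (w (k+1)), Real.rpow_def_of_pos hβ0, mul_comm]
        have h2 : β * β * (((k:ℝ)+1) ^ ((1:ℝ) - ε/2))
            = Real.exp (((1 - ε/2) * Real.log ((k:ℝ)+1) / Real.log β + 2) * Real.log β) := by
          rw [Real.rpow_def_of_pos hk1]
          rw [add_mul, div_mul_cancel₀ _ (ne_of_gt hc)]
          rw [Real.exp_add]
          have he : Real.exp (2 * Real.log β) = β * β := by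
            rw [two_mul, Real.exp_add, Real.exp_log hβ0]
          rw [he, mul_comm (Real.log ((k:ℝ)+1)) (1 - ε/2)]
          ring
        rw [h1, h2]
        apply Real.exp_le_exp.2
        exact mul_le_mul_of_nonneg_right hwle hc.le
      have h6 : (β:ℝ)^(w (k+1)) / (β*β) ≤ ((k:ℝ)+1) ^ ((1:ℝ) - ε/2) := by
        rw [div_le_iff₀ (by positivity)]
        linarith [hpow, mul_comm (β*β) (((k:ℝ)+1) ^ ((1:ℝ) - ε/2))]
      have h7 := inv_anti₀ (by positivity) h6
      rw [inv_div] at h7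
      calc (((k:ℝ)+1) ^ ((1:ℝ) - ε/2))⁻¹ ≤ β * β / (β:ℝ)^(w (k+1)) := h7
        _ = β * β * ((β:ℝ)^(w (k+1)))⁻¹ := by rw [div_eq_mul_inv]
    have hsum3 : Summable (fun k : ℕ => (((k:ℝ)+1) ^ ((1:ℝ) - ε/2))⁻¹) :=
      Summable.of_nonneg_of_le (fun k => by positivity) hlb (hsummable.mul_left (β*β))
    have hsum4 : Summable (fun n : ℕ => (((n:ℕ):ℝ) ^ ((1:ℝ) - ε/2))⁻¹) := by
      rw [← summable_nat_add_iff 1]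
      exact hsum3.congr (fun n => by push_cast; ring)
    have := Real.summable_nat_rpow_inv.1 hsum4
    linarith
  -- Levy's Borel--Cantelli
  have hlevy := MeasureTheory.ae_mem_limsup_atTop_iff μ (s := evt) hevt
  have hceall : ∀ᵐ x ∂μ, ∀ k : ℕ,
      ((β : ℝ) ^ (w (k+1)))⁻¹ ≤ (μ[(evt (k+1)).indicator (fun _ => (1:ℝ)) | ℱ k]) x :=
    (MeasureTheory.ae_all_iff).2 hce
  have hlimsup : ∀ᵐ x ∂μ, x ∈ Filter.limsup evt Filter.atTop := by
    filter_upwards [hlevy, hceall] with x hx hcx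
    rw [hx]
    apply Filter.tendsto_atTop_mono ?_ hdiv
    intro n
    exact Finset.sum_le_sum (fun k _ => hcx k)
  -- eventual comparison of thresholds
  have hthresh : ∀ᶠ m : ℕ in Filter.atTop,
      ((β:ℝ) ^ (w m))⁻¹ ≤ ((Snat m : ℕ) : ℝ) ^ (-(1-ε) : ℝ) := by
    -- reduce to a logarithmic inequality
    have hkey : ∀ᶠ m : ℕ in Filter.atTop,
        Real.log ((Real.log m) / Real.log β + 2) ≤ (ε/2) * Real.log m := by
      have h2 : Real.log =o[Filter.atTop] id := Real.isLittleO_log_id_atTop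
      have h3 : Filter.Tendsto (fun t : ℝ => t / Real.log β + 2) Filter.atTop Filter.atTop :=
        Filter.tendsto_atTop_add_const_right _ 2 (Filter.Tendsto.atTop_div_const hc Filter.tendsto_id)
      have h4 := h2.comp_tendsto h3
      have h5 : (fun t : ℝ => t / Real.log β + 2) =O[Filter.atTop] (fun t : ℝ => t) := by
        apply Asymptotics.IsBigO.of_bound ((Real.log β)⁻¹ + 2)
        filter_upwards [Filter.eventually_ge_atTop (1:ℝ)] with t ht
        simp only [Real.norm_eq_abs]
        rw [abs_of_nonneg (by positivity : (0:ℝ) ≤ t / Real.log β + 2),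
          abs_of_nonneg (by linarith : (0:ℝ) ≤ t)]
        rw [div_eq_mul_inv]
        nlinarith [inv_nonneg.2 hc.le]
      have h6 := (h4.trans_isBigO h5).bound (show (0:ℝ) < ε/2 by linarith)
      have h7 : Filter.Tendsto (fun m : ℕ => Real.log m) Filter.atTop Filter.atTop :=
        Real.tendsto_log_atTop.comp (tendsto_natCast_atTop_atTop)
      filter_upwards [h7.eventually h6, h7.eventually_ge_atTop 0] with m hm hm0
      simp only [Function.comp, Real.norm_eq_abs] at hm
      rw [abs_of_nonneg hm0] at hm
      calc Real.log ((Real.log m) / Real.log β + 2)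
          ≤ |Real.log ((Real.log m) / Real.log β + 2)| := le_abs_self _
        _ ≤ ε/2 * Real.log m := hm
    filter_upwards [hkey, Filter.eventually_ge_atTop 1] with m hm hm1
    -- now the computation
    have hm1' : (1:ℝ) ≤ (m:ℝ) := by exact_mod_cast hm1
    have hS1 : (1:ℝ) ≤ ((Snat m : ℕ) : ℝ) := by exact_mod_cast le_trans hm1 (hSge m)
    have hSpos : (0:ℝ) < ((Snat m : ℕ) : ℝ) := by linarith
    have hwpos : (0:ℝ) < ((w m : ℕ) : ℝ) := by exact_mod_cast hw1 m
    have hw1' : (1:ℝ) ≤ ((w m : ℕ) : ℝ) := by exact_mod_cast hw1 m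
    -- log S_m ≤ log m + log w_m
    have hlogS : Real.log ((Snat m : ℕ) : ℝ) ≤ Real.log m + Real.log (w m) := by
      calc Real.log ((Snat m : ℕ) : ℝ) ≤ Real.log ((m : ℝ) * (w m : ℝ)) :=
            Real.log_le_log hSpos (hSle m hm1)
        _ = Real.log m + Real.log (w m) := Real.log_mul (by linarith) (by linarith)
    -- w_m log β ≥ (1 - ε/2) log m + log β
    have hwlb : (1 - ε/2) * Real.log m + Real.log β ≤ ((w m : ℕ) : ℝ) * Real.log β := by
      have h1 : (1 - ε/2) * Real.log m / Real.log β ≤ (⌈(1 - ε/2) * Real.log m / Real.log β⌉₊ : ℝ) :=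
        Nat.le_ceil _
      have h2 : ((w m : ℕ) : ℝ) = (⌈(1 - ε/2) * Real.log m / Real.log β⌉₊ : ℝ) + 1 := by
        rw [hwdef]; push_cast; ring
      rw [h2, add_mul, one_mul]
      have h3 : (1 - ε/2) * Real.log m ≤ (⌈(1 - ε/2) * Real.log m / Real.log β⌉₊ : ℝ) * Real.log β := by
        rw [← div_le_iff₀ hc]
        exact h1
      linarith
    -- log w_m ≤ log (log m / log β + 2)
    have hwub : Real.log (w m) ≤ Real.log ((Real.log m) / Real.log β + 2) := by
      apply Real.log_le_log hwpos
      have h1 : ((w m : ℕ) : ℝ) ≤ (1 - ε/2) * Real.log m / Real.log β + 2 := by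
        have := Nat.ceil_lt_add_one (R := ℝ)
          (show 0 ≤ (1 - ε/2) * Real.log m / Real.log β by
            apply div_nonneg (mul_nonneg (by linarith) (hlognn _)) hc.le)
        rw [hwdef]
        push_cast
        push_cast at this
        linarith
      refine le_trans h1 ?_
      have : (1 - ε/2) * Real.log m / Real.log β ≤ Real.log m / Real.log β :=
        (div_le_div_iff_of_pos_right hc).2 (by nlinarith [hlognn m])
      linarith
    -- main log inequality
    have hmain : (1-ε) * Real.log ((Snat m : ℕ) : ℝ) ≤ ((w m : ℕ) : ℝ) * Real.log β := by
      have hlogw0 : 0 ≤ Real.log (w m) := Real.log_nonneg hw1'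
      have c1 : (1-ε) * Real.log ((Snat m : ℕ) : ℝ) ≤ (1-ε) * (Real.log m + Real.log (w m)) :=
        mul_le_mul_of_nonneg_left hlogS (by linarith)
      have c2 : (1-ε) * Real.log (w m) ≤ Real.log (w m) := by nlinarith
      have c3 : Real.log (w m) ≤ (ε/2) * Real.log m := le_trans hwub hm
      nlinarith [hlognn m]
    -- convert to powers
    rw [Real.rpow_neg hSpos.le]
    apply inv_anti₀ (Real.rpow_pos_of_pos hSpos _)
    have e1 : ((Snat m : ℕ) : ℝ) ^ ((1-ε) : ℝ)
        = Real.exp ((1-ε) * Real.log ((Snat m : ℕ) : ℝ)) := by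
      rw [Real.rpow_def_of_pos hSpos, mul_comm]
    have e2 : ((β:ℝ) ^ (w m) : ℝ) = Real.exp (((w m : ℕ) : ℝ) * Real.log β) := by
      rw [← Real.rpow_natCast β (w m), Real.rpow_def_of_pos hβ0, mul_comm]
    rw [e1, e2]
    exact Real.exp_le_exp.2 hmain
  -- assemble
  filter_upwards [hlimsup] with x hx
  rw [Filter.mem_limsup_iff_frequently_mem] at hx
  rw [Filter.frequently_atTop]
  intro N
  have hfreq := (hx.and_eventually (hthresh.and (Filter.eventually_ge_atTop (N + 2))))
  rw [Filter.frequently_atTop] at hfreq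
  obtain ⟨m, -, hxm, hth, hmN⟩ := hfreq 0
  have hm0 : m ≠ 0 := by
    intro h; subst h; omega
  refine ⟨Snat m, ?_, ?_, ?_⟩
  · calc N ≤ N + 2 := by omega
      _ ≤ m := hmN
      _ ≤ Snat m := hSge m
  · calc 2 ≤ N + 2 := by omega
      _ ≤ m := hmN
      _ ≤ Snat m := hSge m
  · have hxevt : (bT β)^[Snat m] x < (β ^ (w m))⁻¹ := by
      have := hxm
      simp only [hevtdef, if_neg hm0] at this
      exact this
    exact lt_of_lt_of_le hxevt hth

end PartB

theorem stmt17 (β : ℝ) (hβ : 1 < β) :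
    ∀ᵐ x ∂(volume.restrict (Set.Ico (0:ℝ) 1)),
      Filter.liminf (fun n : ℕ => Real.log ((bT β)^[n] x) / Real.log n) Filter.atTop = -1 := by
  set μ := volume.restrict (Set.Ico (0:ℝ) 1) with hμdef
  have hmem : ∀ᵐ x ∂μ, x ∈ Set.Ico (0:ℝ) 1 := ae_restrict_mem measurableSet_Ico
  have hnozero : ∀ᵐ x ∂μ, ¬(x ∈ Set.Ico (0:ℝ) 1 ∧ ∃ n, (bT β)^[n] x = 0) := by
    have h1 : μ {x | x ∈ Set.Ico (0:ℝ) 1 ∧ ∃ n, (bT β)^[n] x = 0} = 0 := by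
      apply le_antisymm ?_ zero_le
      calc μ {x | x ∈ Set.Ico (0:ℝ) 1 ∧ ∃ n, (bT β)^[n] x = 0}
          ≤ volume {x | x ∈ Set.Ico (0:ℝ) 1 ∧ ∃ n, (bT β)^[n] x = 0} :=
            Measure.restrict_apply_le _ _
        _ = 0 := null_hits_zero hβ
    rw [MeasureTheory.ae_iff]
    simp only [not_not]
    exact h1
  have hlarge : ∀ᵐ x ∂μ, ∀ j : ℕ,
      ∀ᶠ n : ℕ in Filter.atTop, ((n:ℝ)) ^ (-(1 + 1/((j:ℝ)+1)) : ℝ) ≤ (bT β)^[n] x :=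
    MeasureTheory.ae_all_iff.2 (fun j => ae_eventually_large hβ _ (by positivity))
  have hsmall : ∀ᵐ x ∂μ, ∀ j : ℕ,
      ∃ᶠ n : ℕ in Filter.atTop, 2 ≤ n ∧ (bT β)^[n] x < (n:ℝ) ^ (-(1 - 1/((j:ℝ)+2)) : ℝ) :=
    MeasureTheory.ae_all_iff.2 (fun j => ae_frequently_small hβ (by positivity)
      (by
        rw [div_lt_one (by positivity)]
        have : (0:ℝ) ≤ (j:ℝ) := Nat.cast_nonneg j
        linarith))
  filter_upwards [hmem, hnozero, hlarge, hsmall] with x hx hxz hxl hxs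
  have hpos : ∀ n : ℕ, 0 < (bT β)^[n] x := by
    intro n
    rcases lt_or_eq_of_le (iter_nonneg (β := β) hx.1 n) with h | h
    · exact h
    · exact absurd ⟨hx, n, h.symm⟩ hxz
  set f : ℕ → ℝ := fun n => Real.log ((bT β)^[n] x) / Real.log n with hf
  have hub : ∀ n, f n ≤ 0 := by
    intro n
    apply div_nonpos_of_nonpos_of_nonneg
    · exact Real.log_nonpos (hpos n).le (iter_mem hx n).2.le
    · rcases Nat.eq_zero_or_pos n with rfl | hn
      · simp
      · exact Real.log_natCast_nonneg n
  have hbdd_above : Filter.IsBoundedUnder (· ≤ ·) Filter.atTop f :=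
    ⟨0, by rw [Filter.eventually_map]; exact Filter.Eventually.of_forall hub⟩
  have hev_lb : ∀ j : ℕ, ∀ᶠ n : ℕ in Filter.atTop, -(1 + 1/((j:ℝ)+1)) ≤ f n := by
    intro j
    filter_upwards [hxl j, Filter.eventually_ge_atTop 2] with n hn hn2
    have hn1 : (1:ℝ) < (n:ℝ) := by exact_mod_cast hn2
    have hlogn : (0:ℝ) < Real.log n := Real.log_pos hn1
    have h1 : -(1 + 1/((j:ℝ)+1)) * Real.log n ≤ Real.log ((bT β)^[n] x) := by
      have := Real.log_le_log (Real.rpow_pos_of_pos (by linarith) _) hn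
      rwa [Real.log_rpow (by linarith : (0:ℝ) < (n:ℝ))] at this
    calc -(1 + 1/((j:ℝ)+1))
        = (-(1 + 1/((j:ℝ)+1)) * Real.log n) / Real.log n := by
          rw [mul_div_cancel_right₀ _ (ne_of_gt hlogn)]
      _ ≤ f n := (div_le_div_iff_of_pos_right hlogn).2 h1
  have hbdd_below : Filter.IsBoundedUnder (· ≥ ·) Filter.atTop f :=
    ⟨-(1 + 1/(((0:ℕ):ℝ)+1)), by rw [Filter.eventually_map]; exact hev_lb 0⟩
  have hfreq_ub : ∀ j : ℕ, ∃ᶠ n : ℕ in Filter.atTop, f n ≤ -(1 - 1/((j:ℝ)+2)) := by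
    intro j
    refine (hxs j).mono ?_
    rintro n ⟨hn2, hnx⟩
    have hn1 : (1:ℝ) < (n:ℝ) := by exact_mod_cast hn2
    have hlogn : (0:ℝ) < Real.log n := Real.log_pos hn1
    have h1 : Real.log ((bT β)^[n] x) ≤ -(1 - 1/((j:ℝ)+2)) * Real.log n := by
      have := Real.log_le_log (hpos n) hnx.le
      rwa [Real.log_rpow (by linarith : (0:ℝ) < (n:ℝ))] at this
    show Real.log ((bT β)^[n] x) / Real.log n ≤ -(1 - 1/((j:ℝ)+2))
    calc Real.log ((bT β)^[n] x) / Real.log n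
        ≤ (-(1 - 1/((j:ℝ)+2)) * Real.log n) / Real.log n := (div_le_div_iff_of_pos_right hlogn).2 h1
      _ = -(1 - 1/((j:ℝ)+2)) := by rw [mul_div_cancel_right₀ _ (ne_of_gt hlogn)]
  set L := Filter.liminf f Filter.atTop with hL
  have hL_ge : -1 ≤ L := by
    by_contra hcon
    push_neg at hcon
    obtain ⟨j, hj⟩ := exists_nat_one_div_lt (show (0:ℝ) < -1 - L by linarith)
    have h1 : -(1 + 1/((j:ℝ)+1)) ≤ L :=
      Filter.le_liminf_of_le (hbdd_above.isCoboundedUnder_ge) (hev_lb j)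
    linarith [hj]
  have hL_le : L ≤ -1 := by
    by_contra hcon
    push_neg at hcon
    obtain ⟨j, hj⟩ := exists_nat_one_div_lt (show (0:ℝ) < L + 1 by linarith)
    have h1 : L ≤ -(1 - 1/((j:ℝ)+2)) :=
      Filter.liminf_le_of_frequently_le (hfreq_ub j) hbdd_below
    have h2 : 1/((j:ℝ)+2) ≤ 1/((j:ℝ)+1) :=
      one_div_le_one_div_of_le (by positivity) (by linarith)
    linarith [hj, h1, h2]
  linarith [hL_ge, hL_le]
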